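/- Let G be a finite simple graph and uv an edge of G with u ≠ v. Then the number of Hamiltonian cycles of G equals the number of Hamiltonian cycles of G − uv (the graph with edge uv deleted) plus the number of Hamiltonian cycles of G / uv (the multigraph obtained by contracting uv) minus the number of Hamiltonian cycles of G − u minus the number of Hamiltonian cycles of G − v. -/

import Mathlib

/-- A finite multigraph with loops: vertices and edges are labeled by
naturals, and `φ` assigns to each edge label its unordered pair of
endpoints. -/
structure MG where
  V : Finset ℕ
  E : Finset ℕ
  φ : ℕ → Sym2 ℕ

namespace MG

noncomputable section
open scoped Classical
open Finset

/-- Well-formed: endpoints of edges lie in the vertex set. -/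
def WF (G : MG) : Prop := ∀ e ∈ G.E, ∀ x ∈ G.φ e, x ∈ G.V

/-- Simple: no loops and no parallel edges, and well-formed. -/
def Simple (G : MG) : Prop :=
  G.WF ∧ (∀ e ∈ G.E, ¬ (G.φ e).IsDiag) ∧
    ∀ e ∈ G.E, ∀ e' ∈ G.E, G.φ e = G.φ e' → e = e'

/-- Degree of a vertex (loops count twice). -/
def deg (G : MG) (v : ℕ) : ℕ :=
  ∑ e ∈ G.E, ((if v ∈ G.φ e then 1 else 0) + (if G.φ e = Sym2.diag v then 1 else 0))

/-- Adjacency by some edge. -/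
def Adj (G : MG) (x y : ℕ) : Prop := ∃ e ∈ G.E, G.φ e = s(x, y)

/-- Reachability. -/
def Reach (G : MG) : ℕ → ℕ → Prop := Relation.ReflTransGen G.Adj

/-- The connected component of `v` (as a set of vertices). -/
def comp (G : MG) (v : ℕ) : Finset ℕ := G.V.filter (fun w => G.Reach v w)

/-- Number of connected components. -/
def k (G : MG) : ℕ := (G.V.image G.comp).card

/-- The subgraph determined by a pair (vertex set, edge set). -/
def sub (G : MG) (p : Finset ℕ × Finset ℕ) : MG := ⟨p.1, p.2, G.φ⟩

/-- All subgraphs of `G`, encoded as (vertex set, edge set) pairs. -/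
def subPairs (G : MG) : Finset (Finset ℕ × Finset ℕ) :=
  (G.V.powerset ×ˢ G.E.powerset).filter (fun p => ∀ e ∈ p.2, ∀ x ∈ G.φ e, x ∈ p.1)

/-- Edge deletion. -/
def delE (G : MG) (e : ℕ) : MG := ⟨G.V, G.E.erase e, G.φ⟩

/-- Vertex deletion (with all incident edges). -/
def delV (G : MG) (u : ℕ) : MG :=
  ⟨G.V.erase u, G.E.filter (fun e => u ∉ G.φ e), G.φ⟩

/-- Contraction of the edge `e` with endpoints `u`, `v`: delete `e`,
merge `u` into `v`. -/
def contract (G : MG) (e u v : ℕ) : MG :=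
  ⟨G.V.erase u, G.E.erase e,
    fun e' => Sym2.map (fun x => if x = u then v else x) (G.φ e')⟩

/-- Disjoint union (sensible when the vertex and edge label sets are disjoint). -/
def disjUnion (G H : MG) : MG :=
  ⟨G.V ∪ H.V, G.E ∪ H.E, fun e => if e ∈ G.E then G.φ e else H.φ e⟩

/-- One vertex with `n` loops. -/
def K1 (n : ℕ) : MG := ⟨{0}, Finset.range n, fun _ => Sym2.diag 0⟩

/-- The empty graph. -/
def emp : MG := ⟨∅, ∅, fun _ => Sym2.diag 0⟩

/-- Number of Hamiltonian cycles: connected spanning subgraphs with all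
degrees 2. -/
def h (G : MG) : ℕ :=
  ((G.subPairs).filter (fun p =>
    p.1 = G.V ∧ (G.sub p).k = 1 ∧ ∀ v ∈ p.1, (G.sub p).deg v = 2)).card

/-- Number of 2-factors with exactly `k₀` components. -/
def hk (G : MG) (k₀ : ℕ) : ℕ :=
  ((G.subPairs).filter (fun p =>
    p.1 = G.V ∧ (G.sub p).k = k₀ ∧ ∀ v ∈ p.1, (G.sub p).deg v = 2)).card

/-- Number of subgraphs with `k₀` components and `l` edges in which every
vertex has degree 2. -/
def ckl (G : MG) (k₀ l : ℕ) : ℕ :=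
  ((G.subPairs).filter (fun p =>
    (G.sub p).k = k₀ ∧ p.2.card = l ∧ ∀ v ∈ p.1, (G.sub p).deg v = 2)).card

/-- Number of `j`-matchings: subgraphs with `2j` vertices, all of degree 1. -/
def m (G : MG) (j : ℕ) : ℕ :=
  ((G.subPairs).filter (fun p =>
    p.1.card = 2 * j ∧ ∀ v ∈ p.1, (G.sub p).deg v = 1)).card

/-- Isomorphism of multigraphs. -/
def Iso (G H : MG) : Prop :=
  ∃ f g : ℕ → ℕ, Set.BijOn f ↑G.V ↑H.V ∧ Set.BijOn g ↑G.E ↑H.E ∧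
    ∀ e ∈ G.E, H.φ (g e) = Sym2.map f (G.φ e)

end
end MG

namespace MG
noncomputable section
open scoped Classical
open Finset

section
variable {G : MG} {e u v : ℕ}

lemma noDiag (hG : G.Simple) {e' : ℕ} (he' : e' ∈ G.E) (w : ℕ) : G.φ e' ≠ Sym2.diag w := by
  intro h
  exact hG.2.1 e' he' (h ▸ Sym2.diag_isDiag w)

lemma phi_eq_imp (hG : G.Simple) (he : e ∈ G.E) (hφ : G.φ e = s(u, v))
    {e' : ℕ} (he' : e' ∈ G.E) (h : G.φ e' = s(u, v)) : e' = e :=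
  hG.2.2 e' he' e he (h.trans hφ.symm)

lemma notBoth (hG : G.Simple) (he : e ∈ G.E) (hφ : G.φ e = s(u, v)) (huv : u ≠ v)
    {e' : ℕ} (he' : e' ∈ G.E.erase e) : ¬ (u ∈ G.φ e' ∧ v ∈ G.φ e') := by
  rintro ⟨hu, hv⟩
  obtain ⟨y, hy⟩ := Sym2.mem_iff_exists.mp hu
  rw [hy, Sym2.mem_iff] at hv
  rcases hv with rfl | rfl
  · exact huv rfl
  · exact (Finset.mem_erase.mp he').1
      (phi_eq_imp hG he hφ (Finset.mem_of_mem_erase he') hy)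

lemma deg_sub_eq (hG : G.Simple) (P F : Finset ℕ) (hF : F ⊆ G.E) (w : ℕ) :
    (MG.mk P F G.φ).deg w = (F.filter (fun e' => w ∈ G.φ e')).card := by
  unfold deg
  rw [Finset.card_filter]
  refine Finset.sum_congr rfl (fun e' he' => ?_)
  have he'' : e' ∈ F := he'
  rw [if_neg (noDiag hG (hF he'') w), add_zero]

/-- membership in the image of ρ for w ∉ {u,v} -/
lemma mem_map_rho {s : Sym2 ℕ} {w : ℕ} (hwu : w ≠ u) (hwv : w ≠ v) :
    w ∈ Sym2.map (fun x => if x = u then v else x) s ↔ w ∈ s := by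
  induction s using Sym2.ind with
  | _ a b =>
    rw [Sym2.map_pair_eq, Sym2.mem_iff, Sym2.mem_iff]
    constructor
    · rintro (h | h) <;>
      · split_ifs at h with h'
        · exact absurd h hwv
        · simp [h]
    · rintro (rfl | rfl)
      · left; rw [if_neg hwu]
      · right; rw [if_neg hwu]

lemma v_mem_map_rho {s : Sym2 ℕ} :
    v ∈ Sym2.map (fun x => if x = u then v else x) s ↔ u ∈ s ∨ v ∈ s := by
  induction s using Sym2.ind with
  | _ a b =>
    rw [Sym2.map_pair_eq, Sym2.mem_iff, Sym2.mem_iff, Sym2.mem_iff]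
    constructor
    · rintro (h | h)
      · split_ifs at h with h'
        · subst h'; tauto
        · subst h; tauto
      · split_ifs at h with h'
        · subst h'; tauto
        · subst h; tauto
    · rintro ((rfl | rfl) | (rfl | rfl)) <;> simp

lemma map_rho_eq_diag {s : Sym2 ℕ} {w : ℕ} (hwv : w ≠ v)
    (h : Sym2.map (fun x => if x = u then v else x) s = Sym2.diag w) : s = Sym2.diag w := by
  induction s using Sym2.ind with
  | _ a b =>
    rw [Sym2.map_pair_eq, Sym2.diag, Sym2.eq_iff] at h
    have ha : (if a = u then v else a) = w := by tauto
    have hb : (if b = u then v else b) = w := by tauto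
    have ha' : a = w := by
      split_ifs at ha with h'
      · exact absurd ha.symm hwv
      · exact ha
    have hb' : b = w := by
      split_ifs at hb with h'
      · exact absurd hb.symm hwv
      · exact hb
    rw [Sym2.diag, Sym2.eq_iff]; tauto

lemma map_rho_eq_diag_v (hG : G.Simple) (he : e ∈ G.E) (hφ : G.φ e = s(u, v)) (huv : u ≠ v)
    {e' : ℕ} (he' : e' ∈ G.E.erase e) :
    Sym2.map (fun x => if x = u then v else x) (G.φ e') ≠ Sym2.diag v := by
  intro h
  have he'E := Finset.mem_of_mem_erase he'
  obtain ⟨a, b, hab⟩ : ∃ a b, G.φ e' = s(a, b) :=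
    Sym2.exists.mp ⟨G.φ e', rfl⟩
  rw [hab, Sym2.map_pair_eq, Sym2.diag, Sym2.eq_iff] at h
  have ha : (if a = u then v else a) = v := by tauto
  have hb : (if b = u then v else b) = v := by tauto
  have ha' : a = u ∨ a = v := by split_ifs at ha with h' <;> tauto
  have hb' : b = u ∨ b = v := by split_ifs at hb with h' <;> tauto
  -- φ e' = s(a,b) with a,b ∈ {u,v}; all cases contradict simplicity
  rcases ha' with rfl | rfl <;> rcases hb' with rfl | rfl
  · exact noDiag hG he'E _ hab
  · exact (Finset.mem_erase.mp he').1 (phi_eq_imp hG he hφ he'E hab)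
  · exact (Finset.mem_erase.mp he').1 (phi_eq_imp hG he hφ he'E (hab.trans Sym2.eq_swap))
  · exact noDiag hG he'E _ hab

end
end
end MG

namespace MG
noncomputable section
open scoped Classical
open Finset

lemma adj_symm (G : MG) : Symmetric G.Adj := by
  rintro x y ⟨e, he, hφ⟩
  exact ⟨e, he, hφ.trans Sym2.eq_swap⟩

lemma reach_symm (G : MG) : Symmetric G.Reach :=
  by haveI : Std.Symm G.Adj := ⟨adj_symm G⟩; exact fun x y h => Std.Symm.symm (r := Relation.ReflTransGen G.Adj) x y h

lemma reach_lift (H1 H2 : MG) (f : ℕ → ℕ)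
    (h : ∀ x y, H1.Adj x y → H2.Reach (f x) (f y)) :
    ∀ x y, H1.Reach x y → H2.Reach (f x) (f y) := by
  intro x y hr
  induction hr with
  | refl => exact Relation.ReflTransGen.refl
  | tail _ hadj ih => exact ih.trans (h _ _ hadj)

lemma k_eq_one_iff (G : MG) :
    G.k = 1 ↔ G.V.Nonempty ∧ ∀ x ∈ G.V, ∀ y ∈ G.V, G.Reach x y := by
  constructor
  · intro hk
    obtain ⟨A, hA⟩ := Finset.card_eq_one.mp hk
    have hne : G.V.Nonempty := by
      by_contra hemp
      rw [Finset.not_nonempty_iff_eq_empty] at hemp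
      rw [k, hemp, Finset.image_empty] at hk
      simp at hk
    refine ⟨hne, fun x hx y hy => ?_⟩
    have h1 : G.comp x = A := by
      have := Finset.mem_image_of_mem G.comp hx
      rw [hA, Finset.mem_singleton] at this; exact this
    have h2 : G.comp y = A := by
      have := Finset.mem_image_of_mem G.comp hy
      rw [hA, Finset.mem_singleton] at this; exact this
    have hy' : y ∈ G.comp y := by
      rw [comp, Finset.mem_filter]; exact ⟨hy, Relation.ReflTransGen.refl⟩
    rw [h2, ← h1, comp, Finset.mem_filter] at hy'
    exact hy'.2
  · rintro ⟨⟨x₀, hx₀⟩, hall⟩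
    rw [k, Finset.card_eq_one]
    refine ⟨G.comp x₀, ?_⟩
    ext A
    simp only [Finset.mem_image, Finset.mem_singleton]
    constructor
    · rintro ⟨x, hx, rfl⟩
      ext w
      simp only [comp, Finset.mem_filter, and_congr_right_iff]
      intro hw
      constructor
      · intro hxw; exact (hall x₀ hx₀ x hx).trans hxw
      · intro h0w; exact (hall x hx x₀ hx₀).trans h0w
    · rintro rfl; exact ⟨x₀, hx₀, rfl⟩

lemma sub_congr_deg (P F : Finset ℕ) (φ1 φ2 : ℕ → Sym2 ℕ)
    (h : ∀ e ∈ F, φ1 e = φ2 e) (w : ℕ) :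
    (MG.mk P F φ1).deg w = (MG.mk P F φ2).deg w := by
  unfold deg
  refine Finset.sum_congr rfl (fun e heF => ?_)
  have he' : e ∈ F := heF
  rw [show (MG.mk P F φ1).φ e = φ2 e from h e he']

lemma sub_congr_k (P F : Finset ℕ) (φ1 φ2 : ℕ → Sym2 ℕ)
    (h : ∀ e ∈ F, φ1 e = φ2 e) :
    (MG.mk P F φ1).k = (MG.mk P F φ2).k := by
  have hadj : ∀ x y, (MG.mk P F φ1).Adj x y ↔ (MG.mk P F φ2).Adj x y := by
    intro x y
    constructor <;> rintro ⟨e, he, hφ⟩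
    · exact ⟨e, he, ((h e he).symm).trans hφ⟩
    · exact ⟨e, he, (h e he).trans hφ⟩
  have hreach : ∀ x y, (MG.mk P F φ1).Reach x y ↔ (MG.mk P F φ2).Reach x y := by
    intro x y
    constructor
    · exact fun hr => reach_lift _ _ id (fun a b hab => Relation.ReflTransGen.single ((hadj a b).mp hab)) x y hr
    · exact fun hr => reach_lift _ _ id (fun a b hab => Relation.ReflTransGen.single ((hadj a b).mpr hab)) x y hr
  have hcomp : (MG.mk P F φ1).comp = (MG.mk P F φ2).comp := by
    funext z
    unfold comp
    apply Finset.filter_congr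
    intro w _
    simp [hreach]
  unfold k
  rw [hcomp]

end
end MG

namespace MG
noncomputable section
open scoped Classical
open Finset

section
variable {G : MG} {e u v : ℕ}

lemma deg_contract_other (hG : G.Simple) (P F : Finset ℕ) (hF : F ⊆ G.E.erase e)
    {w : ℕ} (hwu : w ≠ u) (hwv : w ≠ v) :
    (MG.mk P F (fun e' => Sym2.map (fun x => if x = u then v else x) (G.φ e'))).deg w
      = (F.filter (fun e' => w ∈ G.φ e')).card := by
  unfold deg
  rw [Finset.card_filter]
  refine Finset.sum_congr rfl (fun e' he' => ?_)
  have he'' : e' ∈ F := he'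
  have h1 : ¬ (Sym2.map (fun x => if x = u then v else x) (G.φ e') = Sym2.diag w) :=
    fun h => noDiag hG (Finset.mem_of_mem_erase (hF he'')) w (map_rho_eq_diag hwv h)
  rw [if_neg h1, add_zero]
  simp only [mem_map_rho hwu hwv]

lemma deg_contract_v (hG : G.Simple) (he : e ∈ G.E) (hφ : G.φ e = s(u, v)) (huv : u ≠ v)
    (P F : Finset ℕ) (hF : F ⊆ G.E.erase e) :
    (MG.mk P F (fun e' => Sym2.map (fun x => if x = u then v else x) (G.φ e'))).deg v
      = (F.filter (fun e' => u ∈ G.φ e')).card + (F.filter (fun e' => v ∈ G.φ e')).card := by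
  unfold deg
  rw [Finset.card_filter, Finset.card_filter, ← Finset.sum_add_distrib]
  refine Finset.sum_congr rfl (fun e' he' => ?_)
  have he'' : e' ∈ F := he'
  rw [if_neg (map_rho_eq_diag_v hG he hφ huv (hF he'')), add_zero]
  have hnb := notBoth hG he hφ huv (hF he'')
  by_cases hu : u ∈ G.φ e' <;> by_cases hv : v ∈ G.φ e'
  · exact absurd ⟨hu, hv⟩ hnb
  · rw [if_pos ((v_mem_map_rho (u := u)).mpr (Or.inl hu)), if_pos hu, if_neg hv]
  · rw [if_pos ((v_mem_map_rho (u := u)).mpr (Or.inr hv)), if_neg hu, if_pos hv]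
  · rw [if_neg (fun h => ((v_mem_map_rho (u := u)).mp h).elim hu hv), if_neg hu, if_neg hv]

/-- σ is an involution -/
lemma sigma_invol (x : ℕ) :
    (fun x => if x = v then u else if x = u then v else x)
      ((fun x => if x = v then u else if x = u then v else x) x) = x := by
  by_cases h1 : x = v <;> by_cases h2 : x = u <;> simp [h1, h2]

lemma adj_swap_fwd (huv : u ≠ v) (P Q F : Finset ℕ)
    (hFv : ∀ e' ∈ F, v ∉ G.φ e') {a b : ℕ}
    (h : (MG.mk P F G.φ).Adj a b) :
    (MG.mk Q F (fun e' => Sym2.map (fun x => if x = u then v else x) (G.φ e'))).Adj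
      ((fun x => if x = v then u else if x = u then v else x) a)
      ((fun x => if x = v then u else if x = u then v else x) b) := by
  obtain ⟨e', he', hab⟩ := h
  have he'' : e' ∈ F := he'
  refine ⟨e', he'', ?_⟩
  have ha : a ∈ G.φ e' := by rw [hab]; exact Sym2.mem_mk_left a b
  have hb : b ∈ G.φ e' := by rw [hab]; exact Sym2.mem_mk_right a b
  have hav : a ≠ v := fun h => hFv e' he'' (h ▸ ha)
  have hbv : b ≠ v := fun h => hFv e' he'' (h ▸ hb)
  show Sym2.map _ (G.φ e') = _
  have hs : ∀ c : ℕ, c ≠ v →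
      (fun x => if x = v then u else if x = u then v else x) c = if c = u then v else c :=
    fun c hc => by simp [hc]
  rw [hab, Sym2.map_pair_eq, hs a hav, hs b hbv]

lemma adj_swap_bwd (huv : u ≠ v) (P Q F : Finset ℕ)
    (hFv : ∀ e' ∈ F, v ∉ G.φ e') {x y : ℕ}
    (h : (MG.mk Q F (fun e' => Sym2.map (fun x => if x = u then v else x) (G.φ e'))).Adj x y) :
    (MG.mk P F G.φ).Adj
      ((fun x => if x = v then u else if x = u then v else x) x)
      ((fun x => if x = v then u else if x = u then v else x) y) := by
  obtain ⟨e', he', hxy⟩ := h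
  have he'' : e' ∈ F := he'
  refine ⟨e', he'', ?_⟩
  obtain ⟨a, b, hab⟩ : ∃ a b, G.φ e' = s(a, b) := Sym2.exists.mp ⟨G.φ e', rfl⟩
  have ha : a ∈ G.φ e' := by rw [hab]; exact Sym2.mem_mk_left a b
  have hb : b ∈ G.φ e' := by rw [hab]; exact Sym2.mem_mk_right a b
  have hav : a ≠ v := fun h => hFv e' he'' (h ▸ ha)
  have hbv : b ≠ v := fun h => hFv e' he'' (h ▸ hb)
  have hxy' : Sym2.map (fun x => if x = u then v else x) (G.φ e') = s(x, y) := hxy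
  rw [hab, Sym2.map_pair_eq, Sym2.eq_iff] at hxy'
  rw [hab, Sym2.eq_iff]
  -- goal: a = σ x ∧ b = σ y ∨ a = σ y ∧ b = σ x
  rcases hxy' with ⟨h1, h2⟩ | ⟨h1, h2⟩
  · left
    constructor
    · rw [← h1]; by_cases hau : a = u <;> simp [hau, hav, huv.symm, Ne.symm huv]
    · rw [← h2]; by_cases hbu : b = u <;> simp [hbu, hbv, huv.symm, Ne.symm huv]
  · right
    constructor
    · rw [← h1]; by_cases hau : a = u <;> simp [hau, hav, huv.symm, Ne.symm huv]
    · rw [← h2]; by_cases hbu : b = u <;> simp [hbu, hbv, huv.symm, Ne.symm huv]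

lemma k_swap (hG : G.Simple) (he : e ∈ G.E) (hφ : G.φ e = s(u, v)) (huv : u ≠ v)
    (F : Finset ℕ) (hFv : ∀ e' ∈ F, v ∉ G.φ e') (hu : u ∈ G.V) (hv : v ∈ G.V) :
    (MG.mk (G.V.erase u) F (fun e' => Sym2.map (fun x => if x = u then v else x) (G.φ e'))).k = 1
      ↔ (MG.mk (G.V.erase v) F G.φ).k = 1 := by
  set σ := fun x => if x = v then u else if x = u then v else x with hσ
  have hinv : ∀ z, σ (σ z) = z := by
    intro z
    by_cases h1 : z = v <;> by_cases h2 : z = u <;> simp [hσ, h1, h2]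
  have hσuv : σ u = v := by simp [hσ, huv]
  have hσvu : σ v = u := by simp [hσ]
  have hmap1 : ∀ x : ℕ, x ∈ G.V.erase u → σ x ∈ G.V.erase v := by
    intro x hx
    rw [Finset.mem_erase] at hx ⊢
    by_cases h1 : x = v
    · subst h1; rw [hσvu]; exact ⟨huv.symm.symm, hu⟩
    · have : σ x = x := by simp [hσ, h1, hx.1]
      rw [this]; exact ⟨h1, hx.2⟩
  have hmap2 : ∀ x : ℕ, x ∈ G.V.erase v → σ x ∈ G.V.erase u := by
    intro x hx
    rw [Finset.mem_erase] at hx ⊢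
    by_cases h1 : x = u
    · subst h1; rw [hσuv]; exact ⟨huv.symm, hv⟩
    · have : σ x = x := by simp [hσ, h1, hx.1]
      rw [this]; exact ⟨h1, hx.2⟩
  rw [k_eq_one_iff, k_eq_one_iff]
  constructor
  · rintro ⟨hne, hall⟩
    refine ⟨⟨u, Finset.mem_erase.mpr ⟨huv, hu⟩⟩, ?_⟩
    intro x hx y hy
    have hr := hall (σ x) (hmap2 x hx) (σ y) (hmap2 y hy)
    have := reach_lift _ _ σ
      (fun a b hab => Relation.ReflTransGen.single (adj_swap_bwd huv (G.V.erase v) (G.V.erase u) F hFv hab)) _ _ hr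
    rwa [hinv, hinv] at this
  · rintro ⟨hne, hall⟩
    refine ⟨⟨v, Finset.mem_erase.mpr ⟨huv.symm, hv⟩⟩, ?_⟩
    intro x hx y hy
    have hr := hall (σ x) (hmap1 x hx) (σ y) (hmap1 y hy)
    have := reach_lift _ _ σ
      (fun a b hab => Relation.ReflTransGen.single (adj_swap_fwd huv (G.V.erase v) (G.V.erase u) F hFv hab)) _ _ hr
    rwa [hinv, hinv] at this

end
end
end MG

namespace MG
noncomputable section
open scoped Classical
open Finset

section
variable {G : MG} {e u v : ℕ}

lemma adj_contract_fwd (hφ : G.φ e = s(u, v)) (P Q F : Finset ℕ) {a b : ℕ}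
    (h : (MG.mk P (insert e F) G.φ).Adj a b) :
    (MG.mk Q F (fun e' => Sym2.map (fun x => if x = u then v else x) (G.φ e'))).Reach
      ((fun x => if x = u then v else x) a) ((fun x => if x = u then v else x) b) := by
  obtain ⟨e', he', hab⟩ := h
  have he'' : e' ∈ insert e F := he'
  have hab' : G.φ e' = s(a, b) := hab
  rcases Finset.mem_insert.mp he'' with rfl | hmem
  · have : (fun x => if x = u then v else x) a = (fun x => if x = u then v else x) b := by
      rcases Sym2.eq_iff.mp (hφ.symm.trans hab') with ⟨rfl, rfl⟩ | ⟨rfl, rfl⟩ <;> simp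
    rw [this]
    exact Relation.ReflTransGen.refl
  · exact Relation.ReflTransGen.single
      ⟨e', hmem, by show Sym2.map _ (G.φ e') = _; rw [hab', Sym2.map_pair_eq]⟩

lemma adj_contract_bwd (he : e ∈ G.E) (hφ : G.φ e = s(u, v)) (P Q F : Finset ℕ) {x y : ℕ}
    (h : (MG.mk Q F (fun e' => Sym2.map (fun x => if x = u then v else x) (G.φ e'))).Adj x y) :
    (MG.mk P (insert e F) G.φ).Reach x y := by
  obtain ⟨e', he', hxy⟩ := h
  have he'' : e' ∈ F := he'
  obtain ⟨a, b, hab⟩ : ∃ a b, G.φ e' = s(a, b) := Sym2.exists.mp ⟨G.φ e', rfl⟩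
  have hxy' : Sym2.map (fun x => if x = u then v else x) (G.φ e') = s(x, y) := hxy
  rw [hab, Sym2.map_pair_eq] at hxy'
  have key : ∀ c z : ℕ, (if c = u then v else c) = z → (MG.mk P (insert e F) G.φ).Reach z c := by
    intro c z hc
    by_cases hcu : c = u
    · subst hcu
      rw [if_pos rfl] at hc
      subst hc
      exact Relation.ReflTransGen.single ⟨e, Finset.mem_insert_self e F, hφ.trans Sym2.eq_swap⟩
    · rw [if_neg hcu] at hc
      subst hc
      exact Relation.ReflTransGen.refl
  have hadj : (MG.mk P (insert e F) G.φ).Adj a b :=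
    ⟨e', Finset.mem_insert_of_mem he'', hab⟩
  rcases Sym2.eq_iff.mp hxy' with ⟨h1, h2⟩ | ⟨h1, h2⟩
  · exact (key a x h1).trans ((Relation.ReflTransGen.single hadj).trans
      (reach_symm _ (key b y h2)))
  · exact (key b x h2).trans ((Relation.ReflTransGen.single (adj_symm _ hadj)).trans
      (reach_symm _ (key a y h1)))

lemma k_contract_iff (he : e ∈ G.E) (hφ : G.φ e = s(u, v)) (huv : u ≠ v)
    (F : Finset ℕ) (hu : u ∈ G.V) (hv : v ∈ G.V) :
    (MG.mk (G.V.erase u) F (fun e' => Sym2.map (fun x => if x = u then v else x) (G.φ e'))).k = 1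
      ↔ (MG.mk G.V (insert e F) G.φ).k = 1 := by
  have hρmem : ∀ a ∈ G.V, (if a = u then v else a) ∈ G.V.erase u := by
    intro a ha
    by_cases hau : a = u
    · rw [if_pos hau]; exact Finset.mem_erase.mpr ⟨huv.symm, hv⟩
    · rw [if_neg hau]; exact Finset.mem_erase.mpr ⟨hau, ha⟩
  have hself : ∀ a, (MG.mk G.V (insert e F) G.φ).Reach a (if a = u then v else a) := by
    intro a
    by_cases hau : a = u
    · subst hau
      rw [if_pos rfl]
      exact Relation.ReflTransGen.single ⟨e, Finset.mem_insert_self e F, hφ⟩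
    · rw [if_neg hau]
      exact Relation.ReflTransGen.refl
  rw [k_eq_one_iff, k_eq_one_iff]
  constructor
  · rintro ⟨hne, hall⟩
    refine ⟨⟨u, hu⟩, ?_⟩
    intro a ha b hb
    have hr := hall _ (hρmem a ha) _ (hρmem b hb)
    have hr' := reach_lift _ (MG.mk G.V (insert e F) G.φ) id
      (fun x y hxy => adj_contract_bwd he hφ G.V (G.V.erase u) F hxy) _ _ hr
    exact (hself a).trans (hr'.trans (reach_symm _ (hself b)))
  · rintro ⟨hne, hall⟩
    refine ⟨⟨v, Finset.mem_erase.mpr ⟨huv.symm, hv⟩⟩, ?_⟩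
    intro x hx y hy
    have hx' := Finset.mem_erase.mp hx
    have hy' := Finset.mem_erase.mp hy
    have hr := hall x hx'.2 y hy'.2
    have hr' := reach_lift (MG.mk G.V (insert e F) G.φ) _ (fun x => if x = u then v else x)
      (fun a b hab => adj_contract_fwd hφ G.V (G.V.erase u) F hab) _ _ hr
    simp only [if_neg hx'.1, if_neg hy'.1] at hr'
    exact hr'
end
end
end MG

namespace MG
noncomputable section
open scoped Classical
open Finset

section
variable {G : MG} {e u v : ℕ}

lemma map_rho_of_not_mem {s : Sym2 ℕ} (hu : u ∉ s) :
    Sym2.map (fun x => if x = u then v else x) s = s := by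
  induction s using Sym2.ind with
  | _ a b =>
    rw [Sym2.mem_iff] at hu
    push_neg at hu
    rw [Sym2.map_pair_eq, if_neg (fun h => hu.1 h.symm), if_neg (fun h => hu.2 h.symm)]

/-- Hamiltonian cycles avoiding `e` are exactly those of `G.delE e`. -/
lemma hc_delE (G : MG) (e : ℕ) :
    ((G.delE e).subPairs.filter (fun p =>
        p.1 = (G.delE e).V ∧ ((G.delE e).sub p).k = 1 ∧ ∀ w ∈ p.1, ((G.delE e).sub p).deg w = 2))
      = (G.subPairs.filter (fun p =>
        p.1 = G.V ∧ (G.sub p).k = 1 ∧ ∀ w ∈ p.1, (G.sub p).deg w = 2)).filter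
        (fun p => e ∉ p.2) := by
  ext p
  simp only [Finset.mem_filter, subPairs]
  simp only [Finset.mem_filter, subPairs, delE, sub, Finset.mem_product, Finset.mem_powerset,
    Finset.subset_erase, Finset.mem_filter]
  tauto

lemma step_A (G : MG) (e : ℕ) :
    G.h = (G.delE e).h
      + ((G.subPairs.filter (fun p =>
          p.1 = G.V ∧ (G.sub p).k = 1 ∧ ∀ w ∈ p.1, (G.sub p).deg w = 2)).filter
          (fun p => e ∈ p.2)).card := by
  unfold h
  rw [hc_delE]
  rw [← Finset.card_filter_add_card_filter_not
    (s := G.subPairs.filter (fun p =>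
      p.1 = G.V ∧ (G.sub p).k = 1 ∧ ∀ w ∈ p.1, (G.sub p).deg w = 2))
    (p := fun p => e ∈ p.2)]
  ring

end
end
end MG

namespace MG
noncomputable section
open scoped Classical
open Finset

section
variable {G : MG} {e u v : ℕ}

/-- case cu = 0 : these are exactly the Hamiltonian cycles of `G.delV u`. -/
lemma case_cu0 (hG : G.Simple) (he : e ∈ G.E) (hφ : G.φ e = s(u, v)) (huv : u ≠ v) :
    ((G.contract e u v).subPairs.filter (fun p =>
        p.1 = (G.contract e u v).V ∧ ((G.contract e u v).sub p).k = 1 ∧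
          ∀ w ∈ p.1, ((G.contract e u v).sub p).deg w = 2)).filter
      (fun p => (p.2.filter (fun e' => u ∈ G.φ e')).card = 0)
    = (G.delV u).subPairs.filter (fun p =>
        p.1 = (G.delV u).V ∧ ((G.delV u).sub p).k = 1 ∧
          ∀ w ∈ p.1, ((G.delV u).sub p).deg w = 2) := by
  have hue : u ∈ G.φ e := by rw [hφ]; exact Sym2.mem_mk_left u v
  ext p
  simp only [Finset.mem_filter, subPairs]
  simp only [Finset.mem_filter, subPairs, contract, delV, sub, Finset.mem_product,
    Finset.mem_powerset, Finset.card_eq_zero, Finset.filter_eq_empty_iff]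
  constructor
  · rintro ⟨⟨⟨⟨hP, hE⟩, hend⟩, hPV, hk, hdeg⟩, hcu⟩
    have hsame : ∀ e' ∈ p.2, Sym2.map (fun x => if x = u then v else x) (G.φ e')
        = G.φ e' := fun e' he' => map_rho_of_not_mem (hcu he')
    refine ⟨⟨⟨hP, ?_⟩, ?_⟩, hPV, ?_, ?_⟩
    · intro e' he'
      exact Finset.mem_filter.mpr ⟨Finset.mem_of_mem_erase (hE he'), hcu he'⟩
    · intro e' he' x hx
      exact hend e' he' x (by rwa [hsame e' he'])
    · rw [← sub_congr_k p.1 p.2 _ _ hsame]; exact hk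
    · intro w hw
      rw [← sub_congr_deg p.1 p.2 _ _ hsame]; exact hdeg w hw
  · rintro ⟨⟨⟨hP, hE⟩, hend⟩, hPV, hk, hdeg⟩
    have hcu : ∀ e' ∈ p.2, u ∉ G.φ e' := fun e' he' =>
      (Finset.mem_filter.mp (hE he')).2
    have hsame : ∀ e' ∈ p.2, Sym2.map (fun x => if x = u then v else x) (G.φ e')
        = G.φ e' := fun e' he' => map_rho_of_not_mem (hcu e' he')
    refine ⟨⟨⟨⟨hP, ?_⟩, ?_⟩, hPV, ?_, ?_⟩, hcu⟩
    · intro e' he'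
      refine Finset.mem_erase.mpr ⟨?_, (Finset.mem_filter.mp (hE he')).1⟩
      rintro rfl
      exact hcu e' he' hue
    · intro e' he' x hx
      exact hend e' he' x (by rwa [hsame e' he'] at hx)
    · rw [sub_congr_k p.1 p.2 _ _ hsame]; exact hk
    · intro w hw
      rw [sub_congr_deg p.1 p.2 _ _ hsame]; exact hdeg w hw

end
end
end MG

namespace MG
noncomputable section
open scoped Classical
open Finset

section
variable {G : MG} {e u v : ℕ}

lemma mem_hcset_iff (H : MG) (p : Finset ℕ × Finset ℕ) :
    p ∈ H.subPairs.filter (fun p =>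
        p.1 = H.V ∧ (H.sub p).k = 1 ∧ ∀ w ∈ p.1, (H.sub p).deg w = 2)
      ↔ (p.1 = H.V ∧ p.2 ⊆ H.E ∧ (∀ e' ∈ p.2, ∀ x ∈ H.φ e', x ∈ p.1))
        ∧ (MG.mk p.1 p.2 H.φ).k = 1 ∧ ∀ w ∈ p.1, (MG.mk p.1 p.2 H.φ).deg w = 2 := by
  simp only [Finset.mem_filter]
  simp only [Finset.mem_filter, subPairs, sub, Finset.mem_product, Finset.mem_powerset]
  constructor
  · rintro ⟨⟨⟨h1, h2⟩, h3⟩, h4, h5, h6⟩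
    exact ⟨⟨h4, h2, h3⟩, h5, h6⟩
  · rintro ⟨⟨h4, h2, h3⟩, h5, h6⟩
    exact ⟨⟨⟨h4 ▸ Finset.Subset.refl _, h2⟩, h3⟩, h4, h5, h6⟩

/-- case cu = 2 : bijection with Hamiltonian cycles of `G.delV v`. -/
lemma case_cu2 (hG : G.Simple) (he : e ∈ G.E) (hφ : G.φ e = s(u, v)) (huv : u ≠ v) :
    (((G.contract e u v).subPairs.filter (fun p =>
        p.1 = (G.contract e u v).V ∧ ((G.contract e u v).sub p).k = 1 ∧
          ∀ w ∈ p.1, ((G.contract e u v).sub p).deg w = 2)).filter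
      (fun p => (p.2.filter (fun e' => u ∈ G.φ e')).card = 2)).card
    = ((G.delV v).subPairs.filter (fun p =>
        p.1 = (G.delV v).V ∧ ((G.delV v).sub p).k = 1 ∧
          ∀ w ∈ p.1, ((G.delV v).sub p).deg w = 2)).card := by
  have hue : u ∈ G.φ e := by rw [hφ]; exact Sym2.mem_mk_left u v
  have hve : v ∈ G.φ e := by rw [hφ]; exact Sym2.mem_mk_right u v
  have hu : u ∈ G.V := hG.1 e he u hue
  have hv : v ∈ G.V := hG.1 e he v hve
  apply Finset.card_nbij' (fun p => (G.V.erase v, p.2)) (fun q => (G.V.erase u, q.2))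
  · -- forward membership
    intro p hp
    rw [Finset.mem_coe, Finset.mem_filter, mem_hcset_iff] at hp
    obtain ⟨⟨⟨hPV, hE, hend⟩, hk, hdeg⟩, hcu⟩ := hp
    have hCV : (G.contract e u v).V = G.V.erase u := rfl
    rw [hCV] at hPV
    -- no edge of p.2 touches v
    have hdegv : (MG.mk p.1 p.2 (G.contract e u v).φ).deg v = 2 :=
      hdeg v (hPV ▸ Finset.mem_erase.mpr ⟨huv.symm, hv⟩)
    have hdv : (p.2.filter (fun e' => u ∈ G.φ e')).card
        + (p.2.filter (fun e' => v ∈ G.φ e')).card = 2 := by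
      rw [← deg_contract_v hG he hφ huv p.1 p.2 hE]; exact hdegv
    have hcv : ∀ e' ∈ p.2, v ∉ G.φ e' := by
      have : (p.2.filter (fun e' => v ∈ G.φ e')).card = 0 := by omega
      rw [Finset.card_eq_zero, Finset.filter_eq_empty_iff] at this
      exact this
    rw [Finset.mem_coe, mem_hcset_iff]
    refine ⟨⟨rfl, ?_, ?_⟩, ?_, ?_⟩
    · -- edges avoid v, lie in delV v edge set
      intro e' he'
      exact Finset.mem_filter.mpr ⟨Finset.mem_of_mem_erase (hE he'), hcv e' he'⟩
    · -- endpoints lie in V.erase v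
      intro e' he' x hx
      refine Finset.mem_erase.mpr ⟨fun hxv => hcv e' he' (hxv ▸ hx), ?_⟩
      exact hG.1 e' (Finset.mem_of_mem_erase (hE he')) x hx
    · -- connectivity
      exact (k_swap hG he hφ huv p.2 hcv hu hv).mp (hPV ▸ hk)
    · -- degrees
      intro w hw
      have hwv : w ≠ v := (Finset.mem_erase.mp hw).1
      have hwV : w ∈ G.V := (Finset.mem_erase.mp hw).2
      show (MG.mk (G.V.erase v) p.2 G.φ).deg w = 2
      rw [deg_sub_eq hG (G.V.erase v) p.2 (fun x hx => Finset.mem_of_mem_erase (hE hx)) w]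
      by_cases hwu : w = u
      · subst hwu; exact hcu
      · have hwp : w ∈ p.1 := hPV ▸ Finset.mem_erase.mpr ⟨hwu, hwV⟩
        have := hdeg w hwp
        rw [show (G.contract e u v).φ
            = (fun e' => Sym2.map (fun x => if x = u then v else x) (G.φ e')) from rfl] at this
        rw [← deg_contract_other hG p.1 p.2 hE hwu hwv]
        exact this
  · -- backward membership
    intro q hq
    rw [Finset.mem_coe, mem_hcset_iff] at hq
    obtain ⟨⟨hQV, hE, hend⟩, hk, hdeg⟩ := hq
    have hDV : (G.delV v).V = G.V.erase v := rfl
    rw [hDV] at hQV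
    have hcv : ∀ e' ∈ q.2, v ∉ G.φ e' := fun e' he' => (Finset.mem_filter.mp (hE he')).2
    have hEe : q.2 ⊆ G.E.erase e := by
      intro e' he'
      refine Finset.mem_erase.mpr ⟨?_, (Finset.mem_filter.mp (hE he')).1⟩
      rintro rfl
      exact hcv e' he' hve
    have hcu : (q.2.filter (fun e' => u ∈ G.φ e')).card = 2 := by
      have hu' : u ∈ q.1 := hQV ▸ Finset.mem_erase.mpr ⟨huv, hu⟩
      have := hdeg u hu'
      rw [show (G.delV v).φ = G.φ from rfl] at this
      rwa [deg_sub_eq hG q.1 q.2 (fun x hx => (Finset.mem_filter.mp (hE hx)).1) u] at this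
    rw [Finset.mem_coe, Finset.mem_filter, mem_hcset_iff]
    refine ⟨⟨⟨rfl, hEe, ?_⟩, ?_, ?_⟩, hcu⟩
    · -- endpoints of contracted edges lie in V.erase u
      intro e' he' x hx
      have hx' : x ∈ Sym2.map (fun x => if x = u then v else x) (G.φ e') := hx
      obtain ⟨a, ha, hax⟩ := Sym2.mem_map.mp hx'
      have haV : a ∈ G.V := hG.1 e' (Finset.mem_of_mem_erase (hEe he')) a ha
      refine Finset.mem_erase.mpr ⟨?_, ?_⟩
      · intro hxu
        by_cases hau : a = u
        · rw [if_pos hau] at hax; exact huv (hxu ▸ hax).symm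
        · rw [if_neg hau] at hax; exact hau (hax.trans hxu)
      · by_cases hau : a = u
        · rw [hau, if_pos rfl] at hax; exact hax ▸ hv
        · rw [if_neg hau] at hax; exact hax ▸ haV
    · -- connectivity
      exact (k_swap hG he hφ huv q.2 hcv hu hv).mpr (hQV ▸ hk)
    · -- degrees
      intro w hw
      have hwu : w ≠ u := (Finset.mem_erase.mp hw).1
      have hwV : w ∈ G.V := (Finset.mem_erase.mp hw).2
      show (MG.mk (G.V.erase u) q.2
        (fun e' => Sym2.map (fun x => if x = u then v else x) (G.φ e'))).deg w = 2
      by_cases hwv : w = v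
      · rw [hwv, deg_contract_v hG he hφ huv _ q.2 hEe, hcu]
        have h0 : (q.2.filter (fun e' => v ∈ G.φ e')).card = 0 := by
          rw [Finset.card_eq_zero, Finset.filter_eq_empty_iff]; exact hcv
        omega
      · have hwq : w ∈ q.1 := hQV ▸ Finset.mem_erase.mpr ⟨hwv, hwV⟩
        have := hdeg w hwq
        rw [show (G.delV v).φ = G.φ from rfl] at this
        rw [deg_sub_eq hG q.1 q.2 (fun x hx => (Finset.mem_filter.mp (hE hx)).1) w] at this
        rw [deg_contract_other hG (G.V.erase u) q.2 hEe hwu hwv]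
        exact this
  · -- left inverse
    intro p hp
    rw [Finset.mem_coe, Finset.mem_filter, mem_hcset_iff] at hp
    have hPV : p.1 = G.V.erase u := hp.1.1.1
    exact Prod.ext (by simp [hPV.symm]) rfl
  · -- right inverse
    intro q hq
    rw [Finset.mem_coe, mem_hcset_iff] at hq
    have hQV : q.1 = G.V.erase v := hq.1.1
    exact Prod.ext (by simp [hQV.symm]) rfl

end
end
end MG

namespace MG
noncomputable section
open scoped Classical
open Finset

section
variable {G : MG} {e u v : ℕ}

/-- case cu = 1 : bijection with Hamiltonian cycles of `G` through `e`. -/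
lemma case_cu1 (hG : G.Simple) (he : e ∈ G.E) (hφ : G.φ e = s(u, v)) (huv : u ≠ v) :
    (((G.contract e u v).subPairs.filter (fun p =>
        p.1 = (G.contract e u v).V ∧ ((G.contract e u v).sub p).k = 1 ∧
          ∀ w ∈ p.1, ((G.contract e u v).sub p).deg w = 2)).filter
      (fun p => (p.2.filter (fun e' => u ∈ G.φ e')).card = 1)).card
    = ((G.subPairs.filter (fun p =>
        p.1 = G.V ∧ (G.sub p).k = 1 ∧ ∀ w ∈ p.1, (G.sub p).deg w = 2)).filter
      (fun p => e ∈ p.2)).card := by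
  have hue : u ∈ G.φ e := by rw [hφ]; exact Sym2.mem_mk_left u v
  have hve : v ∈ G.φ e := by rw [hφ]; exact Sym2.mem_mk_right u v
  have hu : u ∈ G.V := hG.1 e he u hue
  have hv : v ∈ G.V := hG.1 e he v hve
  apply Finset.card_nbij' (fun p => (G.V, insert e p.2)) (fun q => (G.V.erase u, q.2.erase e))
  · -- forward membership
    intro p hp
    rw [Finset.mem_coe, Finset.mem_filter, mem_hcset_iff] at hp
    obtain ⟨⟨⟨hPV, hE, hend⟩, hk, hdeg⟩, hcu⟩ := hp
    rw [show (G.contract e u v).V = G.V.erase u from rfl] at hPV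
    rw [show (G.contract e u v).E = G.E.erase e from rfl] at hE
    have heF : e ∉ p.2 := fun h => (Finset.mem_erase.mp (hE h)).1 rfl
    have hdegv : (MG.mk p.1 p.2 (G.contract e u v).φ).deg v = 2 :=
      hdeg v (hPV ▸ Finset.mem_erase.mpr ⟨huv.symm, hv⟩)
    have hdv : (p.2.filter (fun e' => u ∈ G.φ e')).card
        + (p.2.filter (fun e' => v ∈ G.φ e')).card = 2 := by
      rw [← deg_contract_v hG he hφ huv p.1 p.2 hE]; exact hdegv
    have hcv : (p.2.filter (fun e' => v ∈ G.φ e')).card = 1 := by omega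
    have hsub : insert e p.2 ⊆ G.E :=
      Finset.insert_subset he (fun x hx => Finset.mem_of_mem_erase (hE hx))
    rw [Finset.mem_coe, Finset.mem_filter, mem_hcset_iff]
    refine ⟨⟨⟨rfl, hsub, fun e' he' x hx => hG.1 e' (hsub he') x hx⟩, ?_, ?_⟩,
      Finset.mem_insert_self e p.2⟩
    · -- connectivity
      exact (k_contract_iff he hφ huv p.2 hu hv).mp (hPV ▸ hk)
    · -- degrees
      intro w hw
      show (MG.mk G.V (insert e p.2) G.φ).deg w = 2
      rw [deg_sub_eq hG G.V (insert e p.2) hsub w, Finset.filter_insert]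
      by_cases hwu : w = u
      · subst hwu
        rw [if_pos hue, Finset.card_insert_of_notMem
          (fun hmem => heF (Finset.mem_of_mem_filter e hmem)), hcu]
      · by_cases hwv : w = v
        · subst hwv
          rw [if_pos hve, Finset.card_insert_of_notMem
            (fun hmem => heF (Finset.mem_of_mem_filter e hmem)), hcv]
        · have hwe : w ∉ G.φ e := by
            rw [hφ, Sym2.mem_iff]; push_neg; exact ⟨hwu, hwv⟩
          rw [if_neg hwe]
          have hwp : w ∈ p.1 := hPV ▸ Finset.mem_erase.mpr ⟨hwu, hw⟩
          have := hdeg w hwp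
          rw [show (G.contract e u v).φ
            = (fun e' => Sym2.map (fun x => if x = u then v else x) (G.φ e')) from rfl] at this
          rw [← deg_contract_other hG p.1 p.2 hE hwu hwv]
          exact this
  · -- backward membership
    intro q hq
    rw [Finset.mem_coe, Finset.mem_filter, mem_hcset_iff] at hq
    obtain ⟨⟨⟨hQV, hE, hend⟩, hk, hdeg⟩, heq⟩ := hq
    have hEe : q.2.erase e ⊆ G.E.erase e := Finset.erase_subset_erase e hE
    have hins : insert e (q.2.erase e) = q.2 := Finset.insert_erase heq
    have heF : e ∉ q.2.erase e := Finset.notMem_erase e q.2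
    have hcuF : ((q.2.erase e).filter (fun e' => u ∈ G.φ e')).card = 1 := by
      have := hdeg u (hQV ▸ hu)
      rw [show G.φ = G.φ from rfl, deg_sub_eq hG q.1 q.2 hE u, ← hins,
        Finset.filter_insert, if_pos hue, Finset.card_insert_of_notMem
          (fun hmem => heF (Finset.mem_of_mem_filter e hmem))] at this
      omega
    have hcvF : ((q.2.erase e).filter (fun e' => v ∈ G.φ e')).card = 1 := by
      have := hdeg v (hQV ▸ hv)
      rw [deg_sub_eq hG q.1 q.2 hE v, ← hins,
        Finset.filter_insert, if_pos hve, Finset.card_insert_of_notMem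
          (fun hmem => heF (Finset.mem_of_mem_filter e hmem))] at this
      omega
    rw [Finset.mem_coe, Finset.mem_filter, mem_hcset_iff]
    refine ⟨⟨⟨rfl, hEe, ?_⟩, ?_, ?_⟩, hcuF⟩
    · -- endpoints
      intro e' he' x hx
      have hx' : x ∈ Sym2.map (fun x => if x = u then v else x) (G.φ e') := hx
      obtain ⟨a, ha, hax⟩ := Sym2.mem_map.mp hx'
      have haV : a ∈ G.V := hG.1 e' (Finset.mem_of_mem_erase (hEe he')) a ha
      refine Finset.mem_erase.mpr ⟨?_, ?_⟩
      · intro hxu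
        by_cases hau : a = u
        · rw [if_pos hau] at hax; exact huv (hxu ▸ hax).symm
        · rw [if_neg hau] at hax; exact hau (hax.trans hxu)
      · by_cases hau : a = u
        · rw [hau, if_pos rfl] at hax; exact hax ▸ hv
        · rw [if_neg hau] at hax; exact hax ▸ haV
    · -- connectivity
      refine (k_contract_iff he hφ huv (q.2.erase e) hu hv).mpr ?_
      rw [hins, ← hQV]
      exact hk
    · -- degrees
      intro w hw
      have hwu : w ≠ u := (Finset.mem_erase.mp hw).1
      have hwV : w ∈ G.V := (Finset.mem_erase.mp hw).2
      show (MG.mk (G.V.erase u) (q.2.erase e)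
        (fun e' => Sym2.map (fun x => if x = u then v else x) (G.φ e'))).deg w = 2
      by_cases hwv : w = v
      · rw [hwv, deg_contract_v hG he hφ huv _ (q.2.erase e) hEe, hcuF, hcvF]
      · rw [deg_contract_other hG (G.V.erase u) (q.2.erase e) hEe hwu hwv]
        have hwe : w ∉ G.φ e := by
          rw [hφ, Sym2.mem_iff]; push_neg; exact ⟨hwu, hwv⟩
        have := hdeg w (hQV ▸ hwV)
        rw [deg_sub_eq hG q.1 q.2 hE w, ← hins, Finset.filter_insert, if_neg hwe] at this
        exact this
  · -- left inverse
    intro p hp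
    rw [Finset.mem_coe, Finset.mem_filter, mem_hcset_iff] at hp
    have hPV : p.1 = (G.contract e u v).V := hp.1.1.1
    have hE : p.2 ⊆ (G.contract e u v).E := hp.1.1.2.1
    have heF : e ∉ p.2 := fun h => (Finset.mem_erase.mp (hE h)).1 rfl
    exact Prod.ext (by exact hPV.symm) (by simp [Finset.erase_insert heF])
  · -- right inverse
    intro q hq
    rw [Finset.mem_coe, Finset.mem_filter, mem_hcset_iff] at hq
    exact Prod.ext (by simpa using hq.1.1.1.symm) (by simp [Finset.insert_erase hq.2])

end
end
end MG

open MG in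
/-- Theorem 1(1): h(G) = h(G−uv) + h(G/uv) − h(G−u) − h(G−v) for a simple
graph `G` and an edge `e` with distinct endpoints `u ≠ v`. -/
theorem hamiltonian_deletion_contraction (G : MG) (hG : G.Simple)
    (e u v : ℕ) (he : e ∈ G.E) (hφ : G.φ e = s(u, v)) (huv : u ≠ v) :
    (G.h : ℤ) = (G.delE e).h + (G.contract e u v).h - (G.delV u).h - (G.delV v).h := by
  classical
  have hue : u ∈ G.φ e := by rw [hφ]; exact Sym2.mem_mk_left u v
  have hve : v ∈ G.φ e := by rw [hφ]; exact Sym2.mem_mk_right u v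
  have hu : u ∈ G.V := hG.1 e he u hue
  have hv : v ∈ G.V := hG.1 e he v hve
  have hA : G.h = (G.delE e).h
      + ((G.subPairs.filter (fun p =>
          p.1 = G.V ∧ (G.sub p).k = 1 ∧ ∀ w ∈ p.1, (G.sub p).deg w = 2)).filter
          (fun p => e ∈ p.2)).card := MG.step_A G e
  -- the Hamiltonian cycle set of the contraction
  have key : ∀ p ∈ (G.contract e u v).subPairs.filter (fun p =>
      p.1 = (G.contract e u v).V ∧ ((G.contract e u v).sub p).k = 1 ∧
        ∀ w ∈ p.1, ((G.contract e u v).sub p).deg w = 2),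
      (p.2.filter (fun e' => u ∈ G.φ e')).card = 0 ∨
      (p.2.filter (fun e' => u ∈ G.φ e')).card = 1 ∨
      (p.2.filter (fun e' => u ∈ G.φ e')).card = 2 := by
    intro p hp
    rw [MG.mem_hcset_iff] at hp
    obtain ⟨⟨hPV, hE, hend⟩, hk, hdeg⟩ := hp
    rw [show (G.contract e u v).V = G.V.erase u from rfl] at hPV
    have hdegv := hdeg v (hPV ▸ Finset.mem_erase.mpr ⟨huv.symm, hv⟩)
    have hdv : (p.2.filter (fun e' => u ∈ G.φ e')).card
        + (p.2.filter (fun e' => v ∈ G.φ e')).card = 2 := by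
      rw [← MG.deg_contract_v hG he hφ huv p.1 p.2 hE]; exact hdegv
    omega
  set T := (G.contract e u v).subPairs.filter (fun p =>
      p.1 = (G.contract e u v).V ∧ ((G.contract e u v).sub p).k = 1 ∧
        ∀ w ∈ p.1, ((G.contract e u v).sub p).deg w = 2) with hTdef
  have h1 := Finset.card_filter_add_card_filter_not (s := T)
    (p := fun p => (p.2.filter (fun e' => u ∈ G.φ e')).card = 0)
  have h2 := Finset.card_filter_add_card_filter_not
    (s := T.filter (fun p => ¬ (p.2.filter (fun e' => u ∈ G.φ e')).card = 0))
    (p := fun p => (p.2.filter (fun e' => u ∈ G.φ e')).card = 1)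
  have e1 : (T.filter (fun p => ¬ (p.2.filter (fun e' => u ∈ G.φ e')).card = 0)).filter
      (fun p => (p.2.filter (fun e' => u ∈ G.φ e')).card = 1)
      = T.filter (fun p => (p.2.filter (fun e' => u ∈ G.φ e')).card = 1) := by
    rw [Finset.filter_filter]
    ext p
    simp only [Finset.mem_filter]
    constructor
    · rintro ⟨hp, _, hc⟩; exact ⟨hp, hc⟩
    · rintro ⟨hp, hc⟩; exact ⟨hp, by omega, hc⟩
  have e2 : (T.filter (fun p => ¬ (p.2.filter (fun e' => u ∈ G.φ e')).card = 0)).filter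
      (fun p => ¬ (p.2.filter (fun e' => u ∈ G.φ e')).card = 1)
      = T.filter (fun p => (p.2.filter (fun e' => u ∈ G.φ e')).card = 2) := by
    rw [Finset.filter_filter]
    ext p
    simp only [Finset.mem_filter]
    constructor
    · rintro ⟨hp, h0, h1'⟩
      exact ⟨hp, by rcases key p hp with h | h | h <;> omega⟩
    · rintro ⟨hp, hc⟩; exact ⟨hp, by omega, by omega⟩
  rw [e1, e2] at h2
  have t0 : (T.filter (fun p => (p.2.filter (fun e' => u ∈ G.φ e')).card = 0)).card
      = (G.delV u).h := by
    rw [hTdef, MG.case_cu0 hG he hφ huv]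
    rfl
  have t2 : (T.filter (fun p => (p.2.filter (fun e' => u ∈ G.φ e')).card = 2)).card
      = (G.delV v).h := by
    rw [hTdef]
    rw [MG.case_cu2 hG he hφ huv]
    rfl
  have t1 : (T.filter (fun p => (p.2.filter (fun e' => u ∈ G.φ e')).card = 1)).card
      = ((G.subPairs.filter (fun p =>
          p.1 = G.V ∧ (G.sub p).k = 1 ∧ ∀ w ∈ p.1, (G.sub p).deg w = 2)).filter
          (fun p => e ∈ p.2)).card := by
    rw [hTdef]
    exact MG.case_cu1 hG he hφ huv
  have hTcard : (G.contract e u v).h = T.card := rfl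
  rw [hA, hTcard]
  rw [t0] at h1
  rw [t1, t2] at h2
  push_cast
  omega
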